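/- Let A be a commutative ring, d ∈ A a nonzerodivisor, M a finite projective A-module, and φ : N → M an A-linear map from a finite projective A-module N such that φ becomes an isomorphism after inverting d. Define Fil^r = {x ∈ N : φ(x) ∈ d^r M} for r ≥ 0. Then for every r ≥ 1, Fil^r ∩ dN = d·Fil^{r-1}; equivalently, the natural map Fil^r/(d·Fil^{r-1}) → N/dN is injective. -/

import Mathlib

open Pointwise

lemma dsmul_inj (A : Type*) [CommRing A] (d : A) (hd : d ∈ nonZeroDivisors A)
    (M : Type*) [AddCommGroup M] [Module A M] [Module.Projective A M]
    (m : M) (h : d • m = 0) : m = 0 := by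
  obtain ⟨s, hs⟩ := Module.projective_def'.mp ‹Module.Projective A M›
  have h1 : d • s m = 0 := by rw [← map_smul, h, map_zero]
  have h2 : s m = 0 := by
    ext a
    have := congrArg (fun f : M →₀ A => f a) h1
    simp only [Finsupp.coe_smul, Pi.smul_apply, smul_eq_mul, Finsupp.coe_zero,
      Pi.zero_apply] at this
    exact mem_nonZeroDivisors_iff_right.mp hd _ (by rw [mul_comm]; exact this)
  have h3 := LinearMap.congr_fun hs m
  simp only [LinearMap.coe_comp, Function.comp_apply, LinearMap.id_coe, id_eq] at h3
  rw [h2, map_zero] at h3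
  exact h3.symm

lemma mem_psmul {A : Type*} [CommRing A] {M : Type*} [AddCommGroup M] [Module A M]
    {x : M} {a : A} {S : Submodule A M} : x ∈ a • S ↔ ∃ y ∈ S, a • y = x :=
  Set.mem_smul_set

/-- For a nonzerodivisor `d`, finite projective modules `M`, `N` and `φ : N → M`
which becomes an isomorphism after inverting `d`, the Nygaard-type filtration
`Fil^r = φ⁻¹(d^r M)` satisfies `Fil^r ∩ dN = d·Fil^{r-1}` for all `r ≥ 1`. -/
theorem stmt_2 (A : Type*) [CommRing A] (d : A) (hd : d ∈ nonZeroDivisors A)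
    (M N : Type*) [AddCommGroup M] [Module A M] [Module.Finite A M] [Module.Projective A M]
    [AddCommGroup N] [Module A N] [Module.Finite A N] [Module.Projective A N]
    (φ : N →ₗ[A] M)
    (hφ : Function.Bijective (LocalizedModule.map (Submonoid.powers d) φ))
    (Fil : ℕ → Submodule A N)
    (hFil : ∀ r : ℕ, Fil r = Submodule.comap φ (d ^ r • (⊤ : Submodule A M))) :
    ∀ r : ℕ, 1 ≤ r → Fil r ⊓ (d • (⊤ : Submodule A N)) = d • Fil (r - 1) := by
  intro r hr
  obtain ⟨r, rfl⟩ := Nat.exists_eq_add_of_le hr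
  simp only [Nat.add_sub_cancel_left] at *
  apply le_antisymm
  · rintro x ⟨hx1, hx2⟩
    rw [SetLike.mem_coe, mem_psmul] at hx2
    obtain ⟨y, -, rfl⟩ := hx2
    rw [SetLike.mem_coe, hFil, Submodule.mem_comap, mem_psmul] at hx1
    obtain ⟨m, -, hm⟩ := hx1
    rw [mem_psmul]
    refine ⟨y, ?_, rfl⟩
    rw [hFil, Submodule.mem_comap, mem_psmul]
    refine ⟨m, Submodule.mem_top, ?_⟩
    rw [← sub_eq_zero]
    apply dsmul_inj A d hd M
    rw [map_smul] at hm
    rw [smul_sub, sub_eq_zero]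
    rw [pow_add, pow_one, mul_smul] at hm
    exact hm
  · intro x hx
    rw [mem_psmul] at hx
    obtain ⟨y, hy, rfl⟩ := hx
    refine ⟨?_, Submodule.smul_mem_pointwise_smul y d ⊤ Submodule.mem_top⟩
    rw [hFil, Submodule.mem_comap, mem_psmul] at hy
    obtain ⟨m, -, hm⟩ := hy
    rw [SetLike.mem_coe, hFil, Submodule.mem_comap, mem_psmul]
    exact ⟨m, Submodule.mem_top, by rw [map_smul, ← hm, pow_add, pow_one, mul_smul, smul_comm]⟩
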